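/- Let k be a field of characteristic 2 and let t, s ∈ k be such that x³ + t x + s is irreducible in k[x] (in particular s ≠ 0). Let K = k[x]/(x³ + t x + s), let θ denote the class of x, and for a, b, c ∈ k let ξ = (aθ⁵ + bθ⁴ + cθ³)/s² ∈ K. Then the characteristic polynomial over k of the k-linear map 'multiplication by ξ' on K equals X³ + j₃X² + j₂X + j₁, where j₃ = (ta + c)/s, j₂ = ((a²t² + abs + c²)(s² + t³) + cst(tb + sa) + b²t⁴)/s⁴, and j₁ = (a²(s²a + stb + t²c) + bc(tb + sa) + sb³ + c³)/s³. -/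

import Mathlib

open Polynomial

/-- The characteristic polynomial over `k` of the `k`-linear map "multiplication by `ξ`"
on `k[x]/(f)`. -/
noncomputable def mulCharpoly {k : Type*} [Field k] {f : k[X]} (hf : f ≠ 0)
    (ξ : AdjoinRoot f) : k[X] :=
  haveI : Module.Free k (AdjoinRoot f) :=
    Module.Free.of_basis (AdjoinRoot.powerBasis hf).basis
  haveI : Module.Finite k (AdjoinRoot f) :=
    Module.Finite.of_basis (AdjoinRoot.powerBasis hf).basis
  (LinearMap.mul k (AdjoinRoot f) ξ).charpoly

lemma charpoly_fin_three' {R : Type*} [CommRing R] (M : Matrix (Fin 3) (Fin 3) R) :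
    M.charpoly = X ^ 3 - C (M 0 0 + M 1 1 + M 2 2) * X ^ 2
      + C (M 0 0 * M 1 1 + M 0 0 * M 2 2 + M 1 1 * M 2 2
            - M 0 1 * M 1 0 - M 0 2 * M 2 0 - M 1 2 * M 2 1) * X
      - C (M 0 0 * M 1 1 * M 2 2 - M 0 0 * M 1 2 * M 2 1 - M 0 1 * M 1 0 * M 2 2
            + M 0 1 * M 1 2 * M 2 0 + M 0 2 * M 1 0 * M 2 1 - M 0 2 * M 1 1 * M 2 0) := by
  rw [Matrix.charpoly, Matrix.det_fin_three]
  simp only [Matrix.charmatrix_apply, Matrix.diagonal_apply, C_add, C_mul, C_sub]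
  simp only [Fin.reduceEq, reduceIte]
  ring

set_option maxHeartbeats 2000000 in
/-- Let `k` be a field of characteristic 2 and `t, s ∈ k` with
`x³ + t x + s` irreducible in `k[x]` (in particular `s ≠ 0`).  Let `K = k[x]/(x³ + t x + s)`,
let `θ` be the class of `x`, and for `a, b, c ∈ k` let `ξ = (aθ⁵ + bθ⁴ + cθ³)/s² ∈ K`.  Then
the characteristic polynomial over `k` of the `k`-linear map "multiplication by `ξ`" on `K`
equals `X³ + j₃X² + j₂X + j₁` with `j₃ = (ta + c)/s`,
`j₂ = ((a²t² + abs + c²)(s² + t³) + cst(tb + sa) + b²t⁴)/s⁴` and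
`j₁ = (a²(s²a + stb + t²c) + bc(tb + sa) + sb³ + c³)/s³`. -/
theorem charpoly_mul_xi (k : Type*) [Field k] [CharP k 2] (t s : k) (hs : s ≠ 0)
    (hirr : Irreducible (X ^ 3 + C t * X + C s : k[X])) (a b c : k)
    (θ ξ : AdjoinRoot (X ^ 3 + C t * X + C s : k[X]))
    (hθ : θ = AdjoinRoot.root _)
    (hξ : ξ = algebraMap k _ (a / s ^ 2) * θ ^ 5 + algebraMap k _ (b / s ^ 2) * θ ^ 4
        + algebraMap k _ (c / s ^ 2) * θ ^ 3) :
    mulCharpoly hirr.ne_zero ξ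
      = X ^ 3 + C ((t * a + c) / s) * X ^ 2
        + C (((a ^ 2 * t ^ 2 + a * b * s + c ^ 2) * (s ^ 2 + t ^ 3)
              + c * s * t * (t * b + s * a) + b ^ 2 * t ^ 4) / s ^ 4) * X
        + C ((a ^ 2 * (s ^ 2 * a + s * t * b + t ^ 2 * c) + b * c * (t * b + s * a)
              + s * b ^ 3 + c ^ 3) / s ^ 3) := by
  have hf : (X ^ 3 + C t * X + C s : k[X]) ≠ 0 := hirr.ne_zero
  letI : Module.Free k (AdjoinRoot (X ^ 3 + C t * X + C s : k[X])) :=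
    Module.Free.of_basis (AdjoinRoot.powerBasis hf).basis
  letI : Module.Finite k (AdjoinRoot (X ^ 3 + C t * X + C s : k[X])) :=
    Module.Finite.of_basis (AdjoinRoot.powerBasis hf).basis
  have h2 : (2 : k) = 0 := CharTwo.two_eq_zero
  have h2K : (2 : AdjoinRoot (X ^ 3 + C t * X + C s : k[X])) = 0 := by
    rw [show (2 : AdjoinRoot (X ^ 3 + C t * X + C s : k[X])) = algebraMap k _ 2 from
      (map_ofNat _ 2).symm, h2, map_zero]
  have h0 := AdjoinRoot.eval₂_root (X ^ 3 + C t * X + C s : k[X])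
  simp only [eval₂_add, eval₂_mul, eval₂_pow, eval₂_C, eval₂_X] at h0
  rw [← AdjoinRoot.algebraMap_eq, ← hθ] at h0
  have h3 : θ ^ 3 = algebraMap k _ t * θ + algebraMap k _ s := by
    linear_combination h0 - (algebraMap k _ t * θ + algebraMap k _ s) * h2K
  set α := (a * t + c) / s with hα
  set β := (a * t ^ 2 + b * s + c * t) / s ^ 2 with hβ
  set γ := (a * s + b * t) / s ^ 2 with hγ
  have hA : a / s ^ 2 * (t * s) + c / s ^ 2 * s = α := by
    rw [hα]; field_simp
  have hB : a / s ^ 2 * t ^ 2 + b / s ^ 2 * s + c / s ^ 2 * t = β := by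
    rw [hβ]; field_simp
  have hC : a / s ^ 2 * s + b / s ^ 2 * t = γ := by
    rw [hγ]; field_simp
  have hA' := congrArg (algebraMap k (AdjoinRoot (X ^ 3 + C t * X + C s : k[X]))) hA
  have hB' := congrArg (algebraMap k (AdjoinRoot (X ^ 3 + C t * X + C s : k[X]))) hB
  have hC' := congrArg (algebraMap k (AdjoinRoot (X ^ 3 + C t * X + C s : k[X]))) hC
  simp only [map_add, map_mul, map_pow] at hA' hB' hC'
  have hξ' : ξ = algebraMap k _ α + algebraMap k _ β * θ + algebraMap k _ γ * θ ^ 2 := by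
    rw [hξ]
    linear_combination (algebraMap k _ (a / s ^ 2) * (θ ^ 2 + algebraMap k _ t)
        + algebraMap k _ (b / s ^ 2) * θ + algebraMap k _ (c / s ^ 2)) * h3
      + θ ^ 2 * hC' + θ * hB' + hA'
  have hdeg : (X ^ 3 + C t * X + C s : k[X]).natDegree = 3 := by compute_degree!
  have hdim : (AdjoinRoot.powerBasis hf).dim = 3 := by
    rw [AdjoinRoot.powerBasis_dim, hdeg]
  set B : Module.Basis (Fin 3) k (AdjoinRoot (X ^ 3 + C t * X + C s : k[X])) :=
    (AdjoinRoot.powerBasis hf).basis.reindex (finCongr hdim) with hBdef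
  have hBj : ∀ j : Fin 3, B j = θ ^ (j : ℕ) := by
    intro j
    rw [hBdef, Module.Basis.reindex_apply, PowerBasis.coe_basis]
    simp [hθ, AdjoinRoot.powerBasis_gen]
  have hB0 : B 0 = 1 := by rw [hBj 0]; norm_num
  have hB1 : B 1 = θ := by rw [hBj 1]; norm_num
  have hB2 : B 2 = θ ^ 2 := by rw [hBj 2]; norm_num
  set M : Matrix (Fin 3) (Fin 3) k :=
    !![α, γ * s, β * s; β, α + γ * t, β * t + γ * s; γ, β, α + γ * t] with hMdef
  have hlin : (LinearMap.mul k (AdjoinRoot (X ^ 3 + C t * X + C s : k[X])) ξ)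
      = Matrix.toLin B B M := by
    apply B.ext
    intro j
    rw [Matrix.toLin_self, LinearMap.mul_apply', Fin.sum_univ_three]
    fin_cases j
    · show ξ * B 0 = α • B 0 + β • B 1 + γ • B 2
      rw [hB0, hB1, hB2, hξ']
      simp only [Algebra.smul_def, map_add, map_mul, mul_one]
      try ring
    · show ξ * B 1 = (γ * s) • B 0 + (α + γ * t) • B 1 + β • B 2
      rw [hB0, hB1, hB2, hξ']
      simp only [Algebra.smul_def, map_add, map_mul, mul_one]
      linear_combination algebraMap k _ γ * h3
    · show ξ * B 2 = (β * s) • B 0 + (β * t + γ * s) • B 1 + (α + γ * t) • B 2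
      rw [hB0, hB1, hB2, hξ']
      simp only [Algebra.smul_def, map_add, map_mul, mul_one]
      linear_combination (algebraMap k _ β + algebraMap k _ γ * θ) * h3
  have step1 : mulCharpoly hirr.ne_zero ξ = M.charpoly := by
    rw [show mulCharpoly hirr.ne_zero ξ
        = (LinearMap.mul k (AdjoinRoot (X ^ 3 + C t * X + C s : k[X])) ξ).charpoly from rfl,
      ← LinearMap.charpoly_toMatrix
        (LinearMap.mul k (AdjoinRoot (X ^ 3 + C t * X + C s : k[X])) ξ) B,
      hlin, LinearMap.toMatrix_toLin]
  rw [step1, charpoly_fin_three']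
  have hm00 : M 0 0 = α := rfl
  have hm01 : M 0 1 = γ * s := rfl
  have hm02 : M 0 2 = β * s := rfl
  have hm10 : M 1 0 = β := rfl
  have hm11 : M 1 1 = α + γ * t := rfl
  have hm12 : M 1 2 = β * t + γ * s := rfl
  have hm20 : M 2 0 = γ := rfl
  have hm21 : M 2 1 = β := rfl
  have hm22 : M 2 2 = α + γ * t := rfl
  rw [hm00, hm01, hm02, hm10, hm11, hm12, hm20, hm21, hm22]
  have g3 : -(α + (α + γ * t) + (α + γ * t)) = (t * a + c) / s := by
    simp only [hα, hβ, hγ]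
    simp only [div_eq_mul_inv, ← inv_pow]
    have hss : s * s⁻¹ = 1 := mul_inv_cancel₀ hs
    linear_combination (-2 * a * t * s⁻¹) * hss + (-2 * c * s⁻¹ - b * t ^ 2 * s⁻¹ ^ 2 - 3 * a * t * s⁻¹) * h2
  have g2 : α * (α + γ * t) + α * (α + γ * t) + (α + γ * t) * (α + γ * t)
      - γ * s * β - β * s * γ - (β * t + γ * s) * β
      = ((a ^ 2 * t ^ 2 + a * b * s + c ^ 2) * (s ^ 2 + t ^ 3)
          + c * s * t * (t * b + s * a) + b ^ 2 * t ^ 4) / s ^ 4 := by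
    rw [hα, hβ, hγ]
    simp only [div_eq_mul_inv, ← inv_pow]
    have hss : s * s⁻¹ = 1 := mul_inv_cancel₀ hs
    linear_combination (-c ^ 2 * s⁻¹ ^ 2 - c ^ 2 * s * s⁻¹ ^ 3 - 6 * b * c * t ^ 2 * s⁻¹ ^ 3 - 4 * b ^ 2 * t * s⁻¹ ^ 2 - 4 * b ^ 2 * s * t * s⁻¹ ^ 3 - 4 * a * c * s * t * s⁻¹ ^ 3 - 4 * a * b * s⁻¹ - 4 * a * b * t ^ 3 * s⁻¹ ^ 3 - 4 * a * b * s * s⁻¹ ^ 2 - 4 * a * b * s ^ 2 * s⁻¹ ^ 3 + a ^ 2 * t ^ 2 * s⁻¹ ^ 2 - 3 * a ^ 2 * s * t ^ 2 * s⁻¹ ^ 3) * hss + (c ^ 2 * s⁻¹ ^ 2 - c ^ 2 * t ^ 3 * s⁻¹ ^ 4 - b * c * t ^ 2 * s⁻¹ ^ 3 - 2 * b ^ 2 * t * s⁻¹ ^ 2 + 3 * a * c * t * s⁻¹ ^ 2 - a * c * t ^ 4 * s⁻¹ ^ 4 - 2 * a * b * s⁻¹ + 2 * a ^ 2 * t ^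 2 * s⁻¹ ^ 2 - a ^ 2 * t ^ 5 * s⁻¹ ^ 4) * h2
  have g1 : -(α * (α + γ * t) * (α + γ * t) - α * (β * t + γ * s) * β
        - γ * s * β * (α + γ * t) + γ * s * (β * t + γ * s) * γ
        + β * s * β * β - β * s * (α + γ * t) * γ)
      = (a ^ 2 * (s ^ 2 * a + s * t * b + t ^ 2 * c) + b * c * (t * b + s * a)
          + s * b ^ 3 + c ^ 3) / s ^ 3 := by
    rw [hα, hβ, hγ]
    simp only [div_eq_mul_inv, ← inv_pow]
    have hss : s * s⁻¹ = 1 := mul_inv_cancel₀ hs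
    linear_combination (-c ^ 3 * t ^ 3 * s⁻¹ ^ 5 + 2 * b * c ^ 2 * t ^ 2 * s⁻¹ ^ 4 - 3 * b * c ^ 2 * s * t ^ 2 * s⁻¹ ^ 5 + b ^ 2 * c * t * s⁻¹ ^ 3 + b ^ 2 * c * t ^ 4 * s⁻¹ ^ 5 + b ^ 2 * c * s * t * s⁻¹ ^ 4 - 3 * b ^ 2 * c * s ^ 2 * t * s⁻¹ ^ 5 - 2 * b ^ 3 * s⁻¹ ^ 2 - b ^ 3 * s * s⁻¹ ^ 3 - b ^ 3 * s ^ 2 * s⁻¹ ^ 4 - b ^ 3 * s ^ 3 * s⁻¹ ^ 5 + a * c ^ 2 * t * s⁻¹ ^ 3 - 3 * a * c ^ 2 * t ^ 4 * s⁻¹ ^ 5 + 3 * a * c ^ 2 * s * t * s⁻¹ ^ 4 + 2 * a * b * c * s⁻¹ ^ 2 + 4 * a * b * c * t ^ 3 * s⁻¹ ^ 4 + 3 * a * b * c * s * s⁻¹ ^ 3 - 4 * a * b * c * s * t ^ 3 * s⁻¹ ^ 5 + 3 * a * b * c * s ^ 2 * s⁻¹ ^ 4 + a * b ^ 2 * t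 ^ 5 * s⁻¹ ^ 5 - 4 * a * b ^ 2 * s ^ 2 * t ^ 2 * s⁻¹ ^ 5 + 2 * a ^ 2 * c * t ^ 2 * s⁻¹ ^ 3 - 3 * a ^ 2 * c * t ^ 5 * s⁻¹ ^ 5 + 6 * a ^ 2 * c * s * t ^ 2 * s⁻¹ ^ 4 + a ^ 2 * c * s ^ 2 * t ^ 2 * s⁻¹ ^ 5 + 2 * a ^ 2 * b * t ^ 4 * s⁻¹ ^ 4 + a ^ 2 * b * s * t * s⁻¹ ^ 3 - a ^ 2 * b * s * t ^ 4 * s⁻¹ ^ 5 + a ^ 2 * b * s ^ 2 * t * s⁻¹ ^ 4 - 2 * a ^ 2 * b * s ^ 3 * t * s⁻¹ ^ 5 - 2 * a ^ 3 * s⁻¹ + a ^ 3 * t ^ 3 * s⁻¹ ^ 3 - a ^ 3 * t ^ 6 * s⁻¹ ^ 5 - 2 * a ^ 3 * s * s⁻¹ ^ 2 + 3 * a ^ 3 * s * t ^ 3 * s⁻¹ ^ 4 - a ^ 3 * s ^ 2 * s⁻¹ ^ 3 + a ^ 3 * s ^ 2 * t ^ 3 * s⁻¹ ^ 5 - a ^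 3 * s ^ 3 * s⁻¹ ^ 4 - a ^ 3 * s ^ 4 * s⁻¹ ^ 5) * hss + (-c ^ 3 * s⁻¹ ^ 3 - b ^ 3 * s⁻¹ ^ 2 - a * c ^ 2 * t * s⁻¹ ^ 3 + a * b * c * s⁻¹ ^ 2 - a ^ 2 * c * t ^ 2 * s⁻¹ ^ 3 - a ^ 3 * s⁻¹) * h2
  have G3 := congrArg (C : k → k[X]) g3
  have G2 := congrArg (C : k → k[X]) g2
  have G1 := congrArg (C : k → k[X]) g1
  simp only [map_neg] at G3 G1
  linear_combination (X ^ 2 : k[X]) * G3 + (X : k[X]) * G2 + G1
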